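/- Let d ≥ 2 be an integer and let A_d be the adjacency matrix of Γ_d on m = 3d−1 vertices. Then (A_d^{-1})ᵀ · ( (1/2)A_d − C(d,2)·J_m ) · A_d^{-1} = (W_m − J_m)/2, where C(d,2) = d(d−1)/2. -/

import Mathlib

open Finset Matrix

/-- Two-case description of `x % m` when `x < 2m`, in omega-friendly form. -/
lemma mod_cases' (x m : ℕ) (hm : 0 < m) (h : x < 2 * m) :
    (x % m = x ∧ x < m) ∨ (x % m = x - m ∧ m ≤ x) := by
  rcases Nat.lt_or_ge x m with h1 | h1
  · exact Or.inl ⟨Nat.mod_eq_of_lt h1, h1⟩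
  · refine Or.inr ⟨?_, h1⟩
    rw [Nat.mod_eq_sub_mod h1, Nat.mod_eq_of_lt (by omega)]

/-- The Andrásfai-type graph `Γ_d` on vertex set `Fin (3d - 1)`: `i` and `j` are
adjacent iff `j - i ≡ ±s (mod 3d - 1)` for some `s ∈ {1, 4, 7, …, 3⌈d/2⌉ - 2}`,
i.e. `s = 3k + 1` with `0 ≤ k < ⌈d/2⌉`. -/
def Gamma (d : ℕ) : SimpleGraph (Fin (3 * d - 1)) where
  Adj i j := i ≠ j ∧ ∃ k : ℕ, k < (d + 1) / 2 ∧
    (((i : ℕ) + (3 * k + 1)) % (3 * d - 1) = (j : ℕ) ∨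
     ((j : ℕ) + (3 * k + 1)) % (3 * d - 1) = (i : ℕ))
  symm := by
    constructor
    rintro i j ⟨hne, k, hk, h⟩
    exact ⟨hne.symm, k, hk, h.symm⟩
  loopless := by constructor; rintro i ⟨hne, -⟩; exact hne rfl

noncomputable instance (d : ℕ) : DecidableRel (Gamma d).Adj :=
  fun _ _ => Classical.dec _

/-- The adjacency matrix of `Γ_d`, as a real matrix. -/
noncomputable def adjA (d : ℕ) : Matrix (Fin (3 * d - 1)) (Fin (3 * d - 1)) ℝ :=
  Matrix.of fun i j => if (Gamma d).Adj i j then 1 else 0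

/-- The circulant 0-1 matrix `W_m` with `W_m(i,j) = 1` iff `i - j ≡ -1, 0, 1 (mod m)`. -/
def Wmat (m : ℕ) : Matrix (Fin m) (Fin m) ℝ :=
  Matrix.of fun i j =>
    if (i : ℕ) = (j : ℕ) ∨ ((i : ℕ) + 1) % m = (j : ℕ) ∨ ((j : ℕ) + 1) % m = (i : ℕ)
    then 1 else 0

/-- The all-ones `m × m` matrix `J_m`. -/
def Jmat (m : ℕ) : Matrix (Fin m) (Fin m) ℝ :=
  Matrix.of fun _ _ => 1

lemma adj_char (d : ℕ) (hd : 2 ≤ d) (i j : Fin (3 * d - 1)) :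
    (Gamma d).Adj i j ↔ (((j : ℕ) + (3 * d - 1) - (i : ℕ)) % (3 * d - 1)) % 3 = 1 := by
  have hm : 0 < 3 * d - 1 := by omega
  have ha : (i : ℕ) < 3 * d - 1 := i.isLt
  have hb : (j : ℕ) < 3 * d - 1 := j.isLt
  have ht := mod_cases' ((j : ℕ) + (3 * d - 1) - (i : ℕ)) (3 * d - 1) hm (by omega)
  constructor
  · rintro ⟨hne, k, hk, h | h⟩
    · have hk' : 3 * k + 1 < 3 * d - 1 := by omega
      have h2 := mod_cases' ((i : ℕ) + (3 * k + 1)) (3 * d - 1) hm (by omega)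
      omega
    · have hk' : 3 * k + 1 < 3 * d - 1 := by omega
      have h2 := mod_cases' ((j : ℕ) + (3 * k + 1)) (3 * d - 1) hm (by omega)
      omega
  · intro h
    have hne : i ≠ j := by
      intro he
      have : (i : ℕ) = (j : ℕ) := by rw [he]
      omega
    refine ⟨hne, ?_⟩
    set t := ((j : ℕ) + (3 * d - 1) - (i : ℕ)) % (3 * d - 1) with htdef
    by_cases hc : t < 3 * ((d + 1) / 2) - 1
    · refine ⟨(t - 1) / 3, by omega, Or.inl ?_⟩
      have h2 := mod_cases' ((i : ℕ) + (3 * ((t - 1) / 3) + 1)) (3 * d - 1) hm (by omega)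
      omega
    · refine ⟨(3 * d - 1 - t - 1) / 3, by omega, Or.inr ?_⟩
      have h2 := mod_cases' ((j : ℕ) + (3 * ((3 * d - 1 - t - 1) / 3) + 1)) (3 * d - 1) hm
        (by omega)
      omega

lemma adjA_apply (d : ℕ) (hd : 2 ≤ d) (i j : Fin (3 * d - 1)) :
    adjA d i j =
      if (((j : ℕ) + (3 * d - 1) - (i : ℕ)) % (3 * d - 1)) % 3 = 1 then 1 else 0 := by
  simp only [adjA, Matrix.of_apply]
  exact if_congr (adj_char d hd i j) rfl rfl

lemma count_sum (n : ℕ) :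
    ∑ x ∈ Finset.range (3 * n + 2), (if x % 3 = 1 then (1 : ℝ) else 0) = n + 1 := by
  induction n with
  | zero =>
    rw [show 3 * 0 + 2 = 1 + 1 from rfl, Finset.sum_range_succ, Finset.sum_range_succ,
      Finset.sum_range_zero]
    norm_num
  | succ n ih =>
    rw [show 3 * (n + 1) + 2 = ((3 * n + 2) + 1 + 1) + 1 from by ring,
      Finset.sum_range_succ, Finset.sum_range_succ, Finset.sum_range_succ, ih]
    have h1 : (3 * n + 2) % 3 = 2 := by omega
    have h2 : (3 * n + 2 + 1) % 3 = 0 := by omega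
    have h3 : (3 * n + 2 + 1 + 1) % 3 = 1 := by omega
    rw [h1, h2, h3]
    norm_num

lemma sum_row (d : ℕ) (hd : 2 ≤ d) (i : Fin (3 * d - 1)) :
    ∑ k, adjA d i k = (d : ℝ) := by
  have hm : 0 < 3 * d - 1 := by omega
  have ha : (i : ℕ) < 3 * d - 1 := i.isLt
  simp only [adjA_apply d hd]
  rw [Fin.sum_univ_eq_sum_range
    (fun x => if ((x + (3 * d - 1) - (i : ℕ)) % (3 * d - 1)) % 3 = 1 then (1 : ℝ) else 0)
    (3 * d - 1)]
  have step : ∑ x ∈ Finset.range (3 * d - 1),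
      (if ((x + (3 * d - 1) - (i : ℕ)) % (3 * d - 1)) % 3 = 1 then (1 : ℝ) else 0)
      = ∑ y ∈ Finset.range (3 * d - 1), (if y % 3 = 1 then (1 : ℝ) else 0) := by
    refine Finset.sum_nbij' (fun x => (x + (3 * d - 1) - (i : ℕ)) % (3 * d - 1))
      (fun y => (y + (i : ℕ)) % (3 * d - 1)) ?_ ?_ ?_ ?_ ?_
    · intro x hx
      simp only [Finset.mem_range] at *
      exact Nat.mod_lt _ hm
    · intro y hy
      simp only [Finset.mem_range] at *
      exact Nat.mod_lt _ hm
    · intro x hx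
      simp only [Finset.mem_range] at hx
      have h1 := mod_cases' (x + (3 * d - 1) - (i : ℕ)) (3 * d - 1) hm (by omega)
      have hlt : (x + (3 * d - 1) - (i : ℕ)) % (3 * d - 1) < 3 * d - 1 := Nat.mod_lt _ hm
      have h2 := mod_cases' ((x + (3 * d - 1) - (i : ℕ)) % (3 * d - 1) + (i : ℕ)) (3 * d - 1)
        hm (by omega)
      omega
    · intro y hy
      simp only [Finset.mem_range] at hy
      have h1 := mod_cases' (y + (i : ℕ)) (3 * d - 1) hm (by omega)
      have hlt : (y + (i : ℕ)) % (3 * d - 1) < 3 * d - 1 := Nat.mod_lt _ hm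
      have h2 := mod_cases' ((y + (i : ℕ)) % (3 * d - 1) + (3 * d - 1) - (i : ℕ)) (3 * d - 1)
        hm (by omega)
      omega
    · intro x hx; rfl
  rw [step]
  have hc := count_sum (d - 1)
  rw [show 3 * (d - 1) + 2 = 3 * d - 1 from by omega] at hc
  rw [hc, Nat.cast_sub (by omega : 1 ≤ d)]
  push_cast
  ring

lemma Jmat_symm (m : ℕ) : (Jmat m)ᵀ = Jmat m := rfl

lemma Wmat_symm (m : ℕ) : (Wmat m)ᵀ = Wmat m := by
  ext i j
  simp only [Matrix.transpose_apply, Wmat, Matrix.of_apply]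
  exact if_congr (by omega) rfl rfl

lemma sum_mul_W (m : ℕ) (hm : 5 ≤ m) (f : Fin m → ℝ) (j : Fin m) :
    ∑ k, f k * Wmat m k j
      = f j + f ⟨((j : ℕ) + m - 1) % m, Nat.mod_lt _ (by omega)⟩
          + f ⟨((j : ℕ) + 1) % m, Nat.mod_lt _ (by omega)⟩ := by
  have hb : (j : ℕ) < m := j.isLt
  obtain ⟨jm, vjm⟩ : ∃ jm : Fin m, (jm : ℕ) = ((j : ℕ) + m - 1) % m :=
    ⟨⟨((j : ℕ) + m - 1) % m, Nat.mod_lt _ (by omega)⟩, rfl⟩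
  obtain ⟨jp, vjp⟩ : ∃ jp : Fin m, (jp : ℕ) = ((j : ℕ) + 1) % m :=
    ⟨⟨((j : ℕ) + 1) % m, Nat.mod_lt _ (by omega)⟩, rfl⟩
  have h1 := mod_cases' ((j : ℕ) + m - 1) m (by omega) (by omega)
  have h2 := mod_cases' ((j : ℕ) + 1) m (by omega) (by omega)
  have hW : ∀ k : Fin m, Wmat m k j = if k = j ∨ k = jm ∨ k = jp then 1 else 0 := by
    intro k
    have hk : (k : ℕ) < m := k.isLt
    have h3 := mod_cases' ((k : ℕ) + 1) m (by omega) (by omega)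
    simp only [Wmat, Matrix.of_apply]
    refine if_congr ?_ rfl rfl
    rw [Fin.ext_iff, Fin.ext_iff, Fin.ext_iff, vjm, vjp]
    omega
  simp only [hW]
  have htr : ∀ k : Fin m, f k * (if k = j ∨ k = jm ∨ k = jp then (1 : ℝ) else 0)
      = if k ∈ ({j, jm, jp} : Finset (Fin m)) then f k else 0 := by
    intro k
    simp only [Finset.mem_insert, Finset.mem_singleton]
    split_ifs <;> ring
  simp only [htr]
  rw [Finset.sum_ite_mem, Finset.univ_inter]
  have d1 : j ≠ jm := by rw [ne_eq, Fin.ext_iff, vjm]; omega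
  have d2 : j ≠ jp := by rw [ne_eq, Fin.ext_iff, vjp]; omega
  have d3 : jm ≠ jp := by rw [ne_eq, Fin.ext_iff, vjm, vjp]; omega
  rw [Finset.sum_insert (by simp [d1, d2]), Finset.sum_insert (by simp [d3]),
    Finset.sum_singleton]
  have ej : f jm = f ⟨((j : ℕ) + m - 1) % m, Nat.mod_lt _ (by omega : 0 < m)⟩ := by
    congr 1; exact Fin.ext vjm
  have ej2 : f jp = f ⟨((j : ℕ) + 1) % m, Nat.mod_lt _ (by omega : 0 < m)⟩ := by
    congr 1; exact Fin.ext vjp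
  rw [ej, ej2]
  ring

lemma bridge1 (m a b : ℕ) (hm : 0 < m) (ha : a < m) (hb : b < m) :
    ((b + m - 1) % m + m - a) % m = ((b + m - a) % m + m - 1) % m := by
  have h1 := mod_cases' (b + m - 1) m hm (by omega)
  have h3 := mod_cases' (b + m - a) m hm (by omega)
  have hl1 : (b + m - 1) % m < m := Nat.mod_lt _ hm
  have hl3 : (b + m - a) % m < m := Nat.mod_lt _ hm
  have h4 := mod_cases' ((b + m - 1) % m + m - a) m hm (by omega)
  have h5 := mod_cases' ((b + m - a) % m + m - 1) m hm (by omega)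
  omega

lemma bridge2 (m a b : ℕ) (hm : 0 < m) (ha : a < m) (hb : b < m) :
    ((b + 1) % m + m - a) % m = ((b + m - a) % m + 1) % m := by
  have h1 := mod_cases' (b + 1) m hm (by omega)
  have h3 := mod_cases' (b + m - a) m hm (by omega)
  have hl1 : (b + 1) % m < m := Nat.mod_lt _ hm
  have hl3 : (b + m - a) % m < m := Nat.mod_lt _ hm
  have h4 := mod_cases' ((b + 1) % m + m - a) m hm (by omega)
  have h5 := mod_cases' ((b + m - a) % m + 1) m hm (by omega)
  omega

lemma count3 (d r : ℕ) (hd : 2 ≤ d) (hr : r < 3 * d - 1) :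
    ((if r % 3 = 1 then 1 else 0)
      + (if ((r + (3 * d - 1) - 1) % (3 * d - 1)) % 3 = 1 then 1 else 0)
      + (if ((r + 1) % (3 * d - 1)) % 3 = 1 then 1 else 0) : ℕ)
    = (if r = 0 then 1 else 0) + 1 := by
  have hm : 0 < 3 * d - 1 := by omega
  have g1 := mod_cases' (r + (3 * d - 1) - 1) (3 * d - 1) hm (by omega)
  have g2 := mod_cases' (r + 1) (3 * d - 1) hm (by omega)
  split_ifs <;> omega

lemma AW_eq (d : ℕ) (hd : 2 ≤ d) :
    adjA d * Wmat (3 * d - 1) = 1 + Jmat (3 * d - 1) := by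
  have hm5 : 5 ≤ 3 * d - 1 := by omega
  have hm : 0 < 3 * d - 1 := by omega
  ext i j
  rw [Matrix.mul_apply, sum_mul_W _ hm5]
  have ha : (i : ℕ) < 3 * d - 1 := i.isLt
  have hb : (j : ℕ) < 3 * d - 1 := j.isLt
  simp only [adjA_apply d hd, Matrix.add_apply, Jmat, Matrix.of_apply]
  rw [show (1 : Matrix (Fin (3 * d - 1)) (Fin (3 * d - 1)) ℝ) i j
      = if (i : ℕ) = (j : ℕ) then 1 else 0 from by
    rw [Matrix.one_apply]; exact if_congr Fin.ext_iff rfl rfl]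
  rw [bridge1 (3 * d - 1) (i : ℕ) (j : ℕ) hm ha hb,
    bridge2 (3 * d - 1) (i : ℕ) (j : ℕ) hm ha hb]
  have h3 := mod_cases' ((j : ℕ) + (3 * d - 1) - (i : ℕ)) (3 * d - 1) hm (by omega)
  simp only [show ((i : ℕ) = (j : ℕ)) ↔ (((j : ℕ) + (3 * d - 1) - (i : ℕ)) % (3 * d - 1) = 0)
      from by omega]
  have key := count3 d (((j : ℕ) + (3 * d - 1) - (i : ℕ)) % (3 * d - 1)) hd (Nat.mod_lt _ hm)
  split_ifs at key ⊢ <;> revert key <;> norm_num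

lemma JJ_eq (m : ℕ) : Jmat m * Jmat m = (m : ℝ) • Jmat m := by
  ext i j
  simp [Jmat, Matrix.mul_apply, Finset.sum_const, Matrix.smul_apply]

lemma AJ_eq (d : ℕ) (hd : 2 ≤ d) :
    adjA d * Jmat (3 * d - 1) = (d : ℝ) • Jmat (3 * d - 1) := by
  ext i j
  rw [Matrix.mul_apply]
  simp only [Jmat, Matrix.of_apply, mul_one, Matrix.smul_apply, smul_eq_mul]
  rw [sum_row d hd i]

lemma JW_eq (m : ℕ) (hm : 5 ≤ m) : Jmat m * Wmat m = (3 : ℝ) • Jmat m := by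
  ext i j
  rw [Matrix.mul_apply, sum_mul_W m hm (fun k => Jmat m i k) j]
  simp [Jmat]
  norm_num

lemma WJ_eq (m : ℕ) (hm : 5 ≤ m) : Wmat m * Jmat m = (3 : ℝ) • Jmat m := by
  have h : Wmat m * Jmat m = (Jmat m * Wmat m)ᵀ := by
    rw [Matrix.transpose_mul, Wmat_symm, Jmat_symm]
  rw [h, JW_eq m hm, Matrix.transpose_smul, Jmat_symm]

theorem adjA_inv_conjugation (d : ℕ) (hd : 2 ≤ d) :
    ((adjA d)⁻¹)ᵀ *
        ((1 / 2 : ℝ) • adjA d - (Nat.choose d 2 : ℝ) • Jmat (3 * d - 1)) *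
        (adjA d)⁻¹
      = (1 / 2 : ℝ) • (Wmat (3 * d - 1) - Jmat (3 * d - 1)) := by
  have hm5 : 5 ≤ 3 * d - 1 := by omega
  have hd0 : (d : ℝ) ≠ 0 := by positivity
  have hmc : ((3 * d - 1 : ℕ) : ℝ) = 3 * (d : ℝ) - 1 := by
    rw [Nat.cast_sub (by omega)]; push_cast; ring
  obtain ⟨X, hX⟩ : ∃ X : Matrix (Fin (3 * d - 1)) (Fin (3 * d - 1)) ℝ,
      X = Wmat (3 * d - 1) - (d : ℝ)⁻¹ • Jmat (3 * d - 1) := ⟨_, rfl⟩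
  have hAX : adjA d * X = 1 := by
    rw [hX, Matrix.mul_sub, Matrix.mul_smul, AW_eq d hd, AJ_eq d hd, smul_smul,
      inv_mul_cancel₀ hd0, one_smul, add_sub_cancel_right]
  have hinv : (adjA d)⁻¹ = X := Matrix.inv_eq_right_inv hAX
  have hXT : Xᵀ = X := by
    rw [hX, Matrix.transpose_sub, Matrix.transpose_smul, Wmat_symm, Jmat_symm]
  have hJX : Jmat (3 * d - 1) * X = (d : ℝ)⁻¹ • Jmat (3 * d - 1) := by
    rw [hX, Matrix.mul_sub, Matrix.mul_smul, JW_eq _ hm5, JJ_eq, smul_smul, ← sub_smul]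
    congr 1
    rw [hmc]
    field_simp
    ring
  have hXJ : X * Jmat (3 * d - 1) = (d : ℝ)⁻¹ • Jmat (3 * d - 1) := by
    rw [hX, Matrix.sub_mul, Matrix.smul_mul, WJ_eq _ hm5, JJ_eq, smul_smul, ← sub_smul]
    congr 1
    rw [hmc]
    field_simp
    ring
  rw [hinv, hXT, Matrix.mul_assoc]
  rw [Matrix.sub_mul, Matrix.smul_mul, Matrix.smul_mul, hAX, hJX, smul_smul]
  rw [Matrix.mul_sub, Matrix.mul_smul, Matrix.mul_one, Matrix.mul_smul, hXJ, smul_smul]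
  rw [hX, smul_sub, smul_smul, sub_sub, ← add_smul, smul_sub]
  have hsc : (1 / 2 : ℝ) * (d : ℝ)⁻¹ + (Nat.choose d 2 : ℝ) * (d : ℝ)⁻¹ * (d : ℝ)⁻¹
      = 1 / 2 := by
    rw [Nat.cast_choose_two]
    field_simp
    ring
  rw [hsc]
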